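/- arXiv:1503.01605 — 2 statements merged into one kernel-verified Lean document; each statement's English description precedes it below -/
import Mathlib

section
/- Let g : ℝ → ℂ be an l-periodic C¹ arc-length parametrization of a Dini-smooth Jordan curve with modulus of continuity ω for g', and let f : ℝ → ℝ be an L-Lipschitz nondecreasing function with f(t + 2π) = f(t) + l. Then for every τ the integral T[f](τ) = ∫₀^{2π} Re[ conj(g(f(t)) − g(f(τ))) · i g'(f(τ)) ] / (2 sin²((t−τ)/2)) dt converges absolutely. -/
open MeasureTheory Set Real

/-- The kernel `K(s,t) = Re[ conj(g(t) − g(s)) · i g'(s) ]`. -/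
noncomputable def Kker (g : ℝ → ℂ) (s t : ℝ) : ℝ :=
  ((starRingEnd ℂ) (g t - g s) * (Complex.I * deriv g s)).re

private lemma re_conj_mul (z c : ℂ) :
    ((starRingEnd ℂ) z * c).re = z.re * c.re + z.im * c.im := by
  simp [Complex.mul_re]

/-- Main kernel estimate: if `‖g' - g'(s)‖ ≤ M` on the interval, then
`|K(s,t)| ≤ M * |t - s|`. -/
private lemma Kker_abs_le (g : ℝ → ℂ) (hg : ContDiff ℝ 1 g) (hunit : ∀ s, ‖deriv g s‖ = 1)
    {s t M : ℝ} (hM : ∀ u ∈ Set.uIcc s t, ‖deriv g u - deriv g s‖ ≤ M) :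
    |Kker g s t| ≤ M * |t - s| := by
  set c : ℂ := Complex.I * deriv g s with hc
  have hdiff : Differentiable ℝ g := hg.differentiable one_ne_zero
  have hcont : Continuous (deriv g) := hg.continuous_deriv le_rfl
  set d : ℝ → ℝ := fun u => (deriv g u).re * c.re + (deriv g u).im * c.im with hd
  have hder : ∀ u, HasDerivAt (fun r => (g r).re * c.re + (g r).im * c.im) (d u) u := by
    intro u
    have h1 : HasDerivAt (fun r => (g r).re) ((deriv g u).re) u := by
      exact Complex.reCLM.hasFDerivAt.comp_hasDerivAt u (hdiff u).hasDerivAt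
    have h2 : HasDerivAt (fun r => (g r).im) ((deriv g u).im) u := by
      exact Complex.imCLM.hasFDerivAt.comp_hasDerivAt u (hdiff u).hasDerivAt
    exact (h1.mul_const _).add (h2.mul_const _)
  have hdc : Continuous d :=
    ((Complex.continuous_re.comp hcont).mul continuous_const).add
      ((Complex.continuous_im.comp hcont).mul continuous_const)
  have hK : Kker g s t = ∫ u in s..t, d u := by
    rw [intervalIntegral.integral_eq_sub_of_hasDerivAt (fun u _ => hder u)
      (hdc.intervalIntegrable s t)]
    simp only [Kker, re_conj_mul, Complex.sub_re, Complex.sub_im]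
    ring
  have hcnorm : ‖c‖ = 1 := by
    rw [hc, norm_mul, Complex.norm_I, one_mul, hunit]
  have hbound : ∀ u ∈ Set.uIoc s t, ‖d u‖ ≤ M := by
    intro u hu
    have hu' : u ∈ Set.uIcc s t := Set.uIoc_subset_uIcc hu
    have h0 : ((starRingEnd ℂ) (deriv g s) * c).re = 0 := by
      rw [hc]
      simp [Complex.mul_re, Complex.mul_im]
      ring
    have hdu : d u = ((starRingEnd ℂ) (deriv g u - deriv g s) * c).re := by
      rw [map_sub, sub_mul, Complex.sub_re, h0, sub_zero, re_conj_mul]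
    calc ‖d u‖ = |((starRingEnd ℂ) (deriv g u - deriv g s) * c).re| := by
          rw [Real.norm_eq_abs, hdu]
      _ ≤ ‖(starRingEnd ℂ) (deriv g u - deriv g s) * c‖ := Complex.abs_re_le_norm _
      _ = ‖deriv g u - deriv g s‖ * ‖c‖ := by rw [norm_mul, RCLike.norm_conj]
      _ ≤ M := by rw [hcnorm, mul_one]; exact hM u hu'
  calc |Kker g s t| = ‖∫ u in s..t, d u‖ := by rw [hK, Real.norm_eq_abs]
    _ ≤ M * |t - s| := intervalIntegral.norm_integral_le_of_norm_le_const hbound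

private lemma sin_half_sq_ge {x : ℝ} (hx : |x| ≤ π) :
    (x / π) ^ 2 ≤ Real.sin (x / 2) ^ 2 := by
  have hπ := Real.pi_pos
  have h1 : |x / 2| ≤ π / 2 := by rw [abs_div, abs_two]; linarith
  have h2 := Real.mul_abs_le_abs_sin h1
  have h3 : |x| / π ≤ |Real.sin (x / 2)| := by
    have he : 2 / π * |x / 2| = |x| / π := by
      rw [abs_div, abs_two]; field_simp
    linarith [h2, he]
  calc (x / π) ^ 2 = (|x| / π) ^ 2 := by
        rw [← sq_abs (x / π), abs_div, abs_of_pos hπ]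
    _ ≤ |Real.sin (x / 2)| ^ 2 := by
        apply pow_le_pow_left₀ (by positivity) h3
    _ = Real.sin (x / 2) ^ 2 := sq_abs _

/-- The integrand of `T[f](τ)` converges absolutely, i.e. it is (Lebesgue) integrable on
`(0, 2π)` for every `τ`. -/
theorem T_integrand_integrable (l : ℝ) (hl : 0 < l) (L : NNReal)
    (g : ℝ → ℂ) (hg : ContDiff ℝ 1 g)
    (hper : ∀ s, g (s + l) = g s)
    (hunit : ∀ s, ‖deriv g s‖ = 1)
    (ω : ℝ → ℝ)
    (hω : ∀ δ ≥ (0:ℝ), ∀ x y : ℝ, |x - y| ≤ δ → ‖deriv g x - deriv g y‖ ≤ ω δ)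
    (hωD : ∃ k > (0:ℝ), IntegrableOn (fun t => ω t / t) (Ioc 0 k))
    (f : ℝ → ℝ) (hf : Monotone f) (hfl : LipschitzWith L f)
    (hfqp : ∀ t, f (t + 2 * π) = f t + l) :
    ∀ τ : ℝ, IntegrableOn
      (fun t => Kker g (f τ) (f t) / (2 * Real.sin ((t - τ) / 2) ^ 2))
      (Ioc 0 (2 * π)) := by
  intro τ
  have hπ := Real.pi_pos
  have hfLip : ∀ a b : ℝ, |f a - f b| ≤ (L : ℝ) * |a - b| := by
    intro a b
    have := hfl.dist_le_mul a b
    rwa [Real.dist_eq, Real.dist_eq] at this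
  have hL : 0 < (L : ℝ) := by
    have h2 : |f (0 + 2 * π) - f 0| ≤ (L : ℝ) * |0 + 2 * π - 0| := hfLip _ _
    rw [hfqp 0] at h2
    have he1 : |f 0 + l - f 0| = l := by
      rw [add_sub_cancel_left]; exact abs_of_pos hl
    have he2 : |0 + 2 * π - 0| = 2 * π := by
      rw [zero_add, sub_zero]; exact abs_of_pos (by linarith)
    rw [he1, he2] at h2
    by_contra hcon
    push_neg at hcon
    have hz : (L : ℝ) = 0 := le_antisymm hcon L.coe_nonneg
    rw [hz, zero_mul] at h2
    linarith
  obtain ⟨k, hk, hωk⟩ := hωD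
  have hω0 : ∀ δ : ℝ, 0 ≤ δ → 0 ≤ ω δ := by
    intro δ hδ
    have := hω δ hδ 0 0 (by simpa using hδ)
    simpa using this
  set ε : ℝ := min π (k / (L : ℝ)) with hεdef
  have hε0 : 0 < ε := lt_min hπ (div_pos hk hL)
  have hεπ : ε ≤ π := min_le_left _ _
  have hεk : ε ≤ k / (L : ℝ) := min_le_right _ _
  set φ : ℝ → ℝ := fun t => Kker g (f τ) (f t) / (2 * Real.sin ((t - τ) / 2) ^ 2) with hφdef
  -- measurability
  have hgc : Continuous g := hg.continuous
  have hfc : Continuous f := hfl.continuous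
  have hnum : Continuous fun t => Kker g (f τ) (f t) := by
    apply Complex.continuous_re.comp
    exact (continuous_star.comp ((hgc.comp hfc).sub continuous_const)).mul continuous_const
  have hdenc : Continuous fun t => 2 * Real.sin ((t - τ) / 2) ^ 2 := by
    apply continuous_const.mul
    exact (Real.continuous_sin.comp ((continuous_id.sub continuous_const).div_const 2)).pow 2
  have hφm : AEStronglyMeasurable φ volume :=
    (hnum.measurable.div hdenc.measurable).aestronglyMeasurable
  -- kernel bounds
  have hfine : ∀ t : ℝ, |Kker g (f τ) (f t)| ≤ ω ((L : ℝ) * |t - τ|) * ((L : ℝ) * |t - τ|) := by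
    intro t
    have hδ : (0 : ℝ) ≤ (L : ℝ) * |t - τ| := by positivity
    have hM : ∀ u ∈ Set.uIcc (f τ) (f t), ‖deriv g u - deriv g (f τ)‖ ≤ ω ((L : ℝ) * |t - τ|) := by
      intro u hu
      apply hω _ hδ
      calc |u - f τ| ≤ |f t - f τ| := abs_sub_left_of_mem_uIcc hu
        _ ≤ (L : ℝ) * |t - τ| := hfLip t τ
    calc |Kker g (f τ) (f t)| ≤ ω ((L : ℝ) * |t - τ|) * |f t - f τ| :=
          Kker_abs_le g hg hunit hM
      _ ≤ ω ((L : ℝ) * |t - τ|) * ((L : ℝ) * |t - τ|) :=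
          mul_le_mul_of_nonneg_left (hfLip t τ) (hω0 _ hδ)
  have hcrude : ∀ t : ℝ, |Kker g (f τ) (f t)| ≤ 2 * ((L : ℝ) * |t - τ|) := by
    intro t
    have hM : ∀ u ∈ Set.uIcc (f τ) (f t), ‖deriv g u - deriv g (f τ)‖ ≤ 2 := by
      intro u _
      calc ‖deriv g u - deriv g (f τ)‖ ≤ ‖deriv g u‖ + ‖deriv g (f τ)‖ := norm_sub_le _ _
        _ = 2 := by rw [hunit, hunit]; norm_num
    calc |Kker g (f τ) (f t)| ≤ 2 * |f t - f τ| := Kker_abs_le g hg hunit hM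
      _ ≤ 2 * ((L : ℝ) * |t - τ|) := mul_le_mul_of_nonneg_left (hfLip t τ) (by norm_num)
  -- denominator lower bound
  have hden : ∀ t : ℝ, |t - τ| ≤ π →
      2 * ((t - τ) / π) ^ 2 ≤ 2 * Real.sin ((t - τ) / 2) ^ 2 := by
    intro t ht
    have := sin_half_sq_ge ht
    linarith
  -- general quotient bound
  have hφbound : ∀ t : ℝ, t ≠ τ → |t - τ| ≤ π → ∀ N : ℝ, |Kker g (f τ) (f t)| ≤ N →
      ‖φ t‖ ≤ (π ^ 2 / 2) * (N / (t - τ) ^ 2) := by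
    intro t ht hle N hN
    have hd0 : t - τ ≠ 0 := sub_ne_zero.2 ht
    have hdp0 : (t - τ) / π ≠ 0 := div_ne_zero hd0 Real.pi_ne_zero
    have h20 : 0 < ((t - τ) / π) ^ 2 :=
      lt_of_le_of_ne (sq_nonneg _) (Ne.symm (pow_ne_zero 2 hdp0))
    have hquad : 0 < 2 * ((t - τ) / π) ^ 2 := by linarith
    have hsinpos : 0 < 2 * Real.sin ((t - τ) / 2) ^ 2 := lt_of_lt_of_le hquad (hden t hle)
    have hNn : 0 ≤ N := le_trans (abs_nonneg _) hN
    have heq : φ t = Kker g (f τ) (f t) / (2 * Real.sin ((t - τ) / 2) ^ 2) := rfl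
    rw [Real.norm_eq_abs, heq, abs_div, abs_of_pos hsinpos]
    calc |Kker g (f τ) (f t)| / (2 * Real.sin ((t - τ) / 2) ^ 2)
        ≤ N / (2 * ((t - τ) / π) ^ 2) := div_le_div₀ hNn hN hquad (hden t hle)
      _ = (π ^ 2 / 2) * (N / (t - τ) ^ 2) := by
          field_simp
  -- integrability of the scaled modulus of continuity
  have hψ : IntervalIntegrable (fun x => ω ((L : ℝ) * x) / ((L : ℝ) * x)) volume 0 (k / (L : ℝ)) := by
    have h0 : IntervalIntegrable (fun t => ω t / t) volume 0 k :=
      (intervalIntegrable_iff_integrableOn_Ioc_of_le hk.le).2 hωk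
    simpa using h0.comp_mul_left (c := (L : ℝ))
  -- right piece
  have hS1 : IntegrableOn φ (Ioc τ (τ + ε)) := by
    have h1 := hψ.comp_sub_right τ
    have h2 : IntervalIntegrable (fun x => ω ((L : ℝ) * (x - τ)) / ((L : ℝ) * (x - τ)))
        volume τ (τ + ε) := by
      apply h1.mono_set
      have hkL : 0 < k / (L : ℝ) := div_pos hk hL
      rw [zero_add, Set.uIcc_of_le (by linarith : τ ≤ τ + ε),
        Set.uIcc_of_le (by linarith : τ ≤ k / (L : ℝ) + τ)]
      exact Set.Icc_subset_Icc le_rfl (by linarith)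
    have hG : IntegrableOn
        (fun t => (π ^ 2 * (L : ℝ) ^ 2 / 2) * (ω ((L : ℝ) * (t - τ)) / ((L : ℝ) * (t - τ))))
        (Ioc τ (τ + ε)) := by
      have h3 := (intervalIntegrable_iff_integrableOn_Ioc_of_le (by linarith : τ ≤ τ + ε)).1 h2
      exact h3.const_mul _
    apply hG.mono' hφm.restrict
    rw [ae_restrict_iff' measurableSet_Ioc]
    refine ae_of_all _ fun t ht => ?_
    obtain ⟨ht1, ht2⟩ := ht
    have htτ : t ≠ τ := ne_of_gt ht1
    have habs : |t - τ| = t - τ := abs_of_pos (sub_pos.2 ht1)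
    have hle : |t - τ| ≤ π := by rw [habs]; linarith
    calc ‖φ t‖ ≤ (π ^ 2 / 2) * ((ω ((L : ℝ) * |t - τ|) * ((L : ℝ) * |t - τ|)) / (t - τ) ^ 2) :=
          hφbound t htτ hle _ (hfine t)
      _ = (π ^ 2 * (L : ℝ) ^ 2 / 2) * (ω ((L : ℝ) * (t - τ)) / ((L : ℝ) * (t - τ))) := by
          rw [habs]
          have hd0 : t - τ ≠ 0 := sub_ne_zero.2 htτ
          field_simp
  -- left piece
  have hS2 : IntegrableOn φ (Ioc (τ - ε) τ) := by
    have h1 := hψ.comp_sub_left τ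
    have h2 : IntervalIntegrable (fun x => ω ((L : ℝ) * (τ - x)) / ((L : ℝ) * (τ - x)))
        volume (τ - ε) τ := by
      apply h1.mono_set
      have hkL : 0 < k / (L : ℝ) := div_pos hk hL
      rw [sub_zero, Set.uIcc_comm τ (τ - k / (L : ℝ)),
        Set.uIcc_of_le (by linarith : τ - k / (L : ℝ) ≤ τ),
        Set.uIcc_of_le (by linarith : τ - ε ≤ τ)]
      exact Set.Icc_subset_Icc (by linarith) le_rfl
    have hG : IntegrableOn
        (fun t => (π ^ 2 * (L : ℝ) ^ 2 / 2) * (ω ((L : ℝ) * (τ - t)) / ((L : ℝ) * (τ - t))))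
        (Ioc (τ - ε) τ) := by
      have h3 := (intervalIntegrable_iff_integrableOn_Ioc_of_le (by linarith : τ - ε ≤ τ)).1 h2
      exact h3.const_mul _
    apply hG.mono' hφm.restrict
    rw [ae_restrict_iff' measurableSet_Ioc]
    refine ae_of_all _ fun t ht => ?_
    obtain ⟨ht1, ht2⟩ := ht
    rcases eq_or_lt_of_le ht2 with heq | hlt
    · subst heq
      have h0 : φ t = 0 := by
        have : Real.sin ((t - t) / 2) = 0 := by simp
        simp [hφdef, this]
      rw [h0, norm_zero]
      simp
    · have htτ : t ≠ τ := ne_of_lt hlt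
      have habs : |t - τ| = τ - t := by
        rw [abs_of_neg (sub_neg.2 hlt)]; ring
      have hle : |t - τ| ≤ π := by rw [habs]; linarith
      calc ‖φ t‖ ≤ (π ^ 2 / 2) * ((ω ((L : ℝ) * |t - τ|) * ((L : ℝ) * |t - τ|)) / (t - τ) ^ 2) :=
            hφbound t htτ hle _ (hfine t)
        _ = (π ^ 2 * (L : ℝ) ^ 2 / 2) * (ω ((L : ℝ) * (τ - t)) / ((L : ℝ) * (τ - t))) := by
            rw [habs]
            have hd0 : τ - t ≠ 0 := sub_ne_zero.2 (Ne.symm htτ)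
            have hsq : (t - τ) ^ 2 = (τ - t) ^ 2 := by ring
            rw [hsq]
            field_simp
  -- far piece
  have hS3 : IntegrableOn φ ((Ioc (τ - π) (τ + π)) \ (Ioo (τ - ε) (τ + ε))) := by
    have hmS : MeasurableSet ((Ioc (τ - π) (τ + π)) \ (Ioo (τ - ε) (τ + ε))) :=
      measurableSet_Ioc.diff measurableSet_Ioo
    have hCint : IntegrableOn (fun _ : ℝ => π ^ 2 * (L : ℝ) / ε)
        ((Ioc (τ - π) (τ + π)) \ (Ioo (τ - ε) (τ + ε))) := by
      exact integrableOn_const (ne_of_lt (lt_of_le_of_lt (measure_mono diff_subset) measure_Ioc_lt_top))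
    apply hCint.mono' hφm.restrict
    rw [ae_restrict_iff' hmS]
    refine ae_of_all _ fun t ht => ?_
    obtain ⟨ht1, ht2⟩ := ht
    have hεle : ε ≤ |t - τ| := by
      rw [Set.mem_Ioo, not_and_or, not_lt, not_lt] at ht2
      rcases ht2 with h | h
      · rw [abs_sub_comm, abs_of_nonneg (by linarith : (0:ℝ) ≤ τ - t)]; linarith
      · rw [abs_of_nonneg (by linarith : (0:ℝ) ≤ t - τ)]; linarith
    have htτ : t ≠ τ := by
      intro h
      rw [h, sub_self, abs_zero] at hεle
      linarith
    have hle : |t - τ| ≤ π := by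
      rw [abs_le]
      constructor
      · linarith [ht1.1]
      · linarith [ht1.2]
    have habs0 : (0:ℝ) < |t - τ| := lt_of_lt_of_le hε0 hεle
    calc ‖φ t‖ ≤ (π ^ 2 / 2) * ((2 * ((L : ℝ) * |t - τ|)) / (t - τ) ^ 2) :=
          hφbound t htτ hle _ (hcrude t)
      _ = π ^ 2 * (L : ℝ) / |t - τ| := by
          have hA : |t - τ| ≠ 0 := habs0.ne'
          have hB : (t - τ) ^ 2 ≠ 0 := pow_ne_zero 2 (sub_ne_zero.2 htτ)
          have h1 : (2 * ((L : ℝ) * |t - τ|)) / (t - τ) ^ 2 = 2 * (L : ℝ) / |t - τ| := by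
            rw [div_eq_div_iff hB hA, ← sq_abs (t - τ)]
            ring
          rw [h1]
          ring
      _ ≤ π ^ 2 * (L : ℝ) / ε := by
          apply div_le_div_of_nonneg_left (by positivity) hε0 hεle
  -- combine on a length 2π interval around τ
  have hcov : Ioc (τ - π) (τ + π) ⊆ (Ioc (τ - ε) τ ∪ Ioc τ (τ + ε)) ∪
      ((Ioc (τ - π) (τ + π)) \ (Ioo (τ - ε) (τ + ε))) := by
    intro t ht
    by_cases h : t ∈ Ioo (τ - ε) (τ + ε)
    · left
      rcases le_or_gt t τ with h1 | h1
      · left; exact ⟨h.1, h1⟩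
      · right; exact ⟨h1, h.2.le⟩
    · right; exact ⟨ht, h⟩
  have hIoc : IntegrableOn φ (Ioc (τ - π) (τ + π)) :=
    (((hS2.union hS1).union hS3)).mono_set hcov
  -- periodicity of the integrand
  have hφper : Function.Periodic φ (2 * π) := by
    intro t
    have h1 : f (t + 2 * π) = f t + l := hfqp t
    have hnum : Kker g (f τ) (f (t + 2 * π)) = Kker g (f τ) (f t) := by
      simp only [Kker, h1, hper]
    have hdeneq : Real.sin ((t + 2 * π - τ) / 2) ^ 2 = Real.sin ((t - τ) / 2) ^ 2 := by
      have he : (t + 2 * π - τ) / 2 = (t - τ) / 2 + π := by ring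
      rw [he, Real.sin_add_pi, neg_sq]
    show Kker g (f τ) (f (t + 2 * π)) / (2 * Real.sin ((t + 2 * π - τ) / 2) ^ 2) = φ t
    rw [hnum, hdeneq]
  -- transfer integrability to (0, 2π] by integer translations
  have hshift : ∀ m : ℤ, IntegrableOn φ
      (Ioc ((τ - π) + m * (2 * π)) ((τ - π) + 2 * π + m * (2 * π))) := by
    intro m
    have h1 : IntervalIntegrable φ volume (τ - π) ((τ - π) + 2 * π) := by
      apply (intervalIntegrable_iff_integrableOn_Ioc_of_le (by linarith)).2
      have : (τ - π) + 2 * π = τ + π := by ring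
      rw [this]
      exact hIoc
    have h2 := h1.comp_add_right (-(m * (2 * π)))
    have heqf : (fun x => φ (x + -((m : ℝ) * (2 * π)))) = φ := by
      funext x
      rw [← sub_eq_add_neg]
      exact (hφper.int_mul m).sub_eq x
    rw [heqf] at h2
    simp only [sub_neg_eq_add] at h2
    exact (intervalIntegrable_iff_integrableOn_Ioc_of_le (by linarith)).1 h2
  set n : ℤ := -⌈(τ - π) / (2 * π)⌉ with hn
  have h2π : (0 : ℝ) < 2 * π := by linarith
  have hn1 : (τ - π) + n * (2 * π) ≤ 0 := by
    have hc := Int.le_ceil ((τ - π) / (2 * π))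
    have : τ - π ≤ (⌈(τ - π) / (2 * π)⌉ : ℝ) * (2 * π) := by
      rw [← div_le_iff₀ h2π] at *
      exact hc
    push_cast [hn]
    linarith
  have hn2 : -(2 * π) ≤ (τ - π) + n * (2 * π) := by
    have hc := Int.ceil_lt_add_one ((τ - π) / (2 * π))
    have : ((⌈(τ - π) / (2 * π)⌉ : ℝ)) * (2 * π) < (τ - π) + 2 * π := by
      have := (mul_lt_mul_of_pos_right hc h2π)
      calc ((⌈(τ - π) / (2 * π)⌉ : ℝ)) * (2 * π) < ((τ - π) / (2 * π) + 1) * (2 * π) := this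
        _ = (τ - π) + 2 * π := by field_simp
    push_cast [hn]
    linarith
  apply ((hshift n).union (hshift (n + 1))).mono_set
  intro t ht
  by_cases h : t ≤ (τ - π) + 2 * π + n * (2 * π)
  · left
    exact ⟨lt_of_le_of_lt hn1 ht.1, h⟩
  · right
    push_neg at h
    constructor
    · push_cast
      linarith
    · push_cast
      linarith [ht.2]
end

section
/- Let fₙ : ℝ → ℝ be L-Lipschitz nondecreasing functions with fₙ(t+2π) = fₙ(t) + l, converging uniformly to f, and let g be an l-periodic C¹ arc-length parametrization of a Dini-smooth Jordan curve. Then the functions T[fₙ] converge uniformly on [0, 2π] to T[f]; in particular T[f] is continuous. -/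
open MeasureTheory Set Real Filter

/-- The operator `T[f](τ) = ∫₀^{2π} K(f(τ), f(t)) / (2 sin²((t−τ)/2)) dt`. -/
noncomputable def Topf (g : ℝ → ℂ) (f : ℝ → ℝ) (τ : ℝ) : ℝ :=
  ∫ t in (0:ℝ)..(2 * π), Kker g (f τ) (f t) / (2 * Real.sin ((t - τ) / 2) ^ 2)

noncomputable def Sop (g : ℝ → ℂ) (h : ℝ → ℝ) (τ : ℝ) : ℝ :=
  ∫ u in (-π)..π, Kker g (h τ) (h (τ + u)) / (2 * Real.sin (u / 2) ^ 2)

/-- membership in uIcc gives distance bound -/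
lemma abs_sub_le_of_uIcc {a b u : ℝ} (hu : u ∈ Set.uIcc a b) : |u - a| ≤ |b - a| := by
  rcases le_total a b with h | h
  · rw [Set.uIcc_of_le h, Set.mem_Icc] at hu
    rw [abs_of_nonneg (by linarith), abs_of_nonneg (by linarith)]; linarith
  · rw [Set.uIcc_of_ge h, Set.mem_Icc] at hu
    rw [abs_of_nonpos (by linarith), abs_of_nonpos (by linarith)]; linarith

lemma re_conj_mul_I_self (z : ℂ) : ((starRingEnd ℂ) z * (Complex.I * z)).re = 0 := by
  simp [Complex.mul_re, Complex.mul_im]; ring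

lemma Kker_eq_integral {g : ℝ → ℂ} (hg : ContDiff ℝ 1 g) (a b : ℝ) :
    Kker g a b
      = ∫ u in a..b,
          ((starRingEnd ℂ) (deriv g u - deriv g a) * (Complex.I * deriv g a)).re := by
  set w := Complex.I * deriv g a with hw
  have hder : ∀ x ∈ Set.uIcc a b,
      HasDerivAt (fun y => ((starRingEnd ℂ) (g y - g a) * w).re)
        (((starRingEnd ℂ) (deriv g x) * w).re) x := by
    intro x _
    have h1 : HasDerivAt g (deriv g x) x :=
      ((hg.differentiable one_ne_zero) x).hasDerivAt
    have h2 : HasDerivAt (fun y => g y - g a) (deriv g x) x := h1.sub_const _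
    have h3 : HasDerivAt (fun y => (starRingEnd ℂ) (g y - g a))
        ((starRingEnd ℂ) (deriv g x)) x := h2.star
    have h4 : HasDerivAt (fun y => (starRingEnd ℂ) (g y - g a) * w)
        ((starRingEnd ℂ) (deriv g x) * w) x := h3.mul_const w
    exact Complex.reCLM.hasFDerivAt.comp_hasDerivAt x h4
  have hcont : Continuous fun u => ((starRingEnd ℂ) (deriv g u) * w).re := by
    exact Complex.continuous_re.comp
      ((Complex.continuous_conj.comp (hg.continuous_deriv le_rfl)).mul continuous_const)
  have h5 := intervalIntegral.integral_eq_sub_of_hasDerivAt hder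
      (hcont.intervalIntegrable a b)
  have h6 : ((starRingEnd ℂ) (g a - g a) * w).re = 0 := by simp
  have h7 : ∀ u : ℝ, ((starRingEnd ℂ) (deriv g u - deriv g a) * w).re
      = ((starRingEnd ℂ) (deriv g u) * w).re := by
    intro u
    have : (starRingEnd ℂ) (deriv g u - deriv g a) * w
        = (starRingEnd ℂ) (deriv g u) * w - (starRingEnd ℂ) (deriv g a) * w := by
      rw [map_sub, sub_mul]
    rw [this, Complex.sub_re, hw, re_conj_mul_I_self, sub_zero]
  calc Kker g a b = ((starRingEnd ℂ) (g b - g a) * w).re := rfl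
    _ = ∫ u in a..b, ((starRingEnd ℂ) (deriv g u) * w).re := by rw [h5, h6, sub_zero]
    _ = _ := by simp_rw [h7]

lemma Kker_bound {g : ℝ → ℂ} (hg : ContDiff ℝ 1 g)
    (hunit : ∀ s, ‖deriv g s‖ = 1) {C : ℝ} (a b : ℝ)
    (hC : ∀ u ∈ Set.uIcc a b, ‖deriv g u - deriv g a‖ ≤ C) :
    |Kker g a b| ≤ C * |b - a| := by
  rw [Kker_eq_integral hg]
  have := intervalIntegral.norm_integral_le_of_norm_le_const (C := C) (a := a) (b := b)
    (f := fun u => ((starRingEnd ℂ) (deriv g u - deriv g a) * (Complex.I * deriv g a)).re) ?_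
  · simpa [Real.norm_eq_abs] using this
  intro x hx
  have hx' : x ∈ Set.uIcc a b := Set.uIoc_subset_uIcc hx
  have h1 : ‖((starRingEnd ℂ) (deriv g x - deriv g a) * (Complex.I * deriv g a)).re‖
      ≤ ‖(starRingEnd ℂ) (deriv g x - deriv g a) * (Complex.I * deriv g a)‖ := by
    rw [Real.norm_eq_abs]; exact Complex.abs_re_le_norm _
  refine h1.trans ?_
  rw [norm_mul, norm_mul, Complex.norm_I, RCLike.norm_conj, one_mul, hunit, mul_one]
  exact hC x hx'

lemma re_aux (z z' w w' : ℂ) :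
    ((starRingEnd ℂ) z * w).re - ((starRingEnd ℂ) z' * w').re
      = ((starRingEnd ℂ) (z - z') * w).re + ((starRingEnd ℂ) z' * (w - w')).re := by
  rw [← Complex.sub_re, ← Complex.add_re]
  congr 1
  rw [map_sub]; ring

/-- B1: bound via modulus of continuity -/
lemma Kker_bound_omega {g : ℝ → ℂ} (hg : ContDiff ℝ 1 g)
    (hunit : ∀ s, ‖deriv g s‖ = 1) {ω : ℝ → ℝ}
    (hω : ∀ δ ≥ (0:ℝ), ∀ x y : ℝ, |x - y| ≤ δ → ‖deriv g x - deriv g y‖ ≤ ω δ)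
    {a b δ : ℝ} (hδ : |b - a| ≤ δ) :
    |Kker g a b| ≤ ω δ * |b - a| := by
  refine Kker_bound hg hunit a b ?_
  intro u hu
  exact hω δ ((abs_nonneg _).trans hδ) u a ((abs_sub_le_of_uIcc hu).trans hδ)

/-- B2: crude bound -/
lemma Kker_bound_two {g : ℝ → ℂ} (hg : ContDiff ℝ 1 g)
    (hunit : ∀ s, ‖deriv g s‖ = 1) (a b : ℝ) : |Kker g a b| ≤ 2 * |b - a| := by
  refine Kker_bound hg hunit a b ?_
  intro u _
  calc ‖deriv g u - deriv g a‖ ≤ ‖deriv g u‖ + ‖deriv g a‖ := norm_sub_le _ _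
    _ = 2 := by rw [hunit, hunit]; norm_num

lemma Kker_diff {g : ℝ → ℂ} (hunit : ∀ s, ‖deriv g s‖ = 1) (a b a' b' : ℝ) :
    |Kker g a b - Kker g a' b'|
      ≤ ‖g b - g b'‖ + ‖g a - g a'‖ + ‖g b' - g a'‖ * ‖deriv g a - deriv g a'‖ := by
  have key : Kker g a b - Kker g a' b'
      = ((starRingEnd ℂ) ((g b - g a) - (g b' - g a')) * (Complex.I * deriv g a)).re
        + ((starRingEnd ℂ) (g b' - g a')
            * ((Complex.I * deriv g a) - (Complex.I * deriv g a'))).re :=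
    re_aux _ _ _ _
  rw [key]
  have habs : ∀ z w : ℂ, |((starRingEnd ℂ) z * w).re| ≤ ‖z‖ * ‖w‖ := by
    intro z w
    calc |((starRingEnd ℂ) z * w).re| ≤ ‖(starRingEnd ℂ) z * w‖ := by
          exact Complex.abs_re_le_norm _
      _ = ‖z‖ * ‖w‖ := by rw [norm_mul, RCLike.norm_conj]
  have h1 := habs ((g b - g a) - (g b' - g a')) (Complex.I * deriv g a)
  have h2 := habs (g b' - g a') ((Complex.I * deriv g a) - (Complex.I * deriv g a'))
  have e1 : ‖Complex.I * deriv g a‖ = 1 := by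
    rw [norm_mul, Complex.norm_I, one_mul, hunit]
  have e2 : ‖(Complex.I * deriv g a) - (Complex.I * deriv g a')‖
      = ‖deriv g a - deriv g a'‖ := by
    rw [← mul_sub, norm_mul, Complex.norm_I, one_mul]
  rw [e1, mul_one] at h1
  rw [e2] at h2
  have h3 : ‖(g b - g a) - (g b' - g a')‖ ≤ ‖g b - g b'‖ + ‖g a - g a'‖ := by
    have e : (g b - g a) - (g b' - g a') = (g b - g b') - (g a - g a') := by ring
    rw [e]; exact norm_sub_le _ _
  calc |_ + _| ≤ |((starRingEnd ℂ) ((g b - g a) - (g b' - g a'))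
          * (Complex.I * deriv g a)).re|
        + |((starRingEnd ℂ) (g b' - g a')
            * ((Complex.I * deriv g a) - (Complex.I * deriv g a'))).re| := abs_add_le _ _
    _ ≤ (‖g b - g b'‖ + ‖g a - g a'‖) + ‖g b' - g a'‖ * ‖deriv g a - deriv g a'‖ :=
        add_le_add (h1.trans h3) h2
    _ = _ := by ring

lemma g_lip {g : ℝ → ℂ} (hg : ContDiff ℝ 1 g)
    (hunit : ∀ s, ‖deriv g s‖ = 1) : LipschitzWith 1 g := by
  refine lipschitzWith_of_nnnorm_deriv_le (hg.differentiable one_ne_zero) ?_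
  intro x
  rw [← NNReal.coe_le_coe, coe_nnnorm, hunit]
  norm_num

/-- A continuous periodic function is uniformly continuous. -/
lemma periodic_unifCont {h : ℝ → ℂ} {l : ℝ} (hl : 0 < l) (hc : Continuous h)
    (hp : Function.Periodic h l) : UniformContinuous h := by
  rw [Metric.uniformContinuous_iff]
  intro ε εpos
  have hcompact : IsCompact (Icc (-l) (2 * l)) := isCompact_Icc
  have huc : UniformContinuousOn h (Icc (-l) (2 * l)) :=
    hcompact.uniformContinuousOn_of_continuous hc.continuousOn
  rw [Metric.uniformContinuousOn_iff] at huc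
  obtain ⟨δ, δpos, hδ⟩ := huc ε εpos
  refine ⟨min δ l, lt_min δpos hl, ?_⟩
  intro x y hxy
  have h1 : dist x y < l := hxy.trans_le (min_le_right _ _)
  have h2 : dist x y < δ := hxy.trans_le (min_le_left _ _)
  set n : ℤ := ⌊x / l⌋ with hn
  have hx0 : 0 ≤ x - n * l := Int.sub_floor_div_mul_nonneg x hl
  have hx1 : x - n * l < l := Int.sub_floor_div_mul_lt x hl
  have hdist : dist (x - n * l) (y - n * l) = dist x y := by
    rw [Real.dist_eq, Real.dist_eq]
    congr 1
    ring
  have hxy' : |x - y| < l := by rw [← Real.dist_eq]; exact h1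
  have hxmem : x - n * l ∈ Icc (-l) (2 * l) := ⟨by linarith, by linarith⟩
  have hymem : y - n * l ∈ Icc (-l) (2 * l) := by
    constructor
    · have := abs_lt.1 hxy'; linarith [this.1, this.2]
    · have := abs_lt.1 hxy'; linarith [this.1, this.2]
  have := hδ (x - n * l) hxmem (y - n * l) hymem (by rw [hdist]; exact h2)
  rwa [hp.sub_int_mul_eq, hp.sub_int_mul_eq] at this

lemma Topf_eq_Sop {g : ℝ → ℂ} {l : ℝ} (hper : ∀ s, g (s + l) = g s)
    (h : ℝ → ℝ) (hqp : ∀ t, h (t + 2 * π) = h t + l) (τ : ℝ) :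
    Topf g h τ = Sop g h τ := by
  set F : ℝ → ℝ := fun t => Kker g (h τ) (h t) / (2 * Real.sin ((t - τ) / 2) ^ 2) with hF
  have hperiodic : Function.Periodic F (2 * π) := by
    intro t
    have e1 : g (h (t + 2 * π)) = g (h t) := by rw [hqp]; exact hper _
    have e2 : Real.sin ((t + 2 * π - τ) / 2) ^ 2 = Real.sin ((t - τ) / 2) ^ 2 := by
      have e : (t + 2 * π - τ) / 2 = (t - τ) / 2 + π := by ring
      rw [e, Real.sin_add_pi, neg_sq]
    simp only [hF, Kker, e1, e2]
  have h1 : Topf g h τ = ∫ t in (τ - π)..(τ - π + 2 * π), F t := by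
    have := hperiodic.intervalIntegral_add_eq 0 (τ - π)
    rw [zero_add] at this
    exact this
  have h2 : (∫ u in (-π)..π, F (τ + u)) = ∫ t in (τ + -π)..(τ + π), F t :=
    intervalIntegral.integral_comp_add_left F τ
  have h3 : Sop g h τ = ∫ u in (-π)..π, F (τ + u) := by
    refine intervalIntegral.integral_congr ?_
    intro u _
    simp only [hF]
    have e : (τ + u - τ) / 2 = u / 2 := by ring
    rw [e]
  rw [h1, h3, h2]
  congr 1 <;> ring

lemma sin_sq_lower {u : ℝ} (h0 : 0 < u) (h1 : u ≤ π) :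
    u ^ 2 / π ^ 2 ≤ Real.sin (u / 2) ^ 2 := by
  have hπ := Real.pi_pos
  have hs : u / π ≤ Real.sin (u / 2) := by
    have := Real.mul_le_sin (x := u / 2) (by linarith) (by linarith)
    calc u / π = 2 / π * (u / 2) := by field_simp
      _ ≤ Real.sin (u / 2) := this
  have hnn : 0 ≤ u / π := by positivity
  calc u ^ 2 / π ^ 2 = (u / π) ^ 2 := by field_simp
    _ ≤ Real.sin (u / 2) ^ 2 := by
        apply pow_le_pow_left₀ hnn hs

lemma sin_sq_pos {u : ℝ} (h0 : 0 < u) (h1 : u ≤ π) : 0 < 2 * Real.sin (u / 2) ^ 2 := by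
  have h2 := sin_sq_lower h0 h1
  have hπ := Real.pi_pos
  have h3 : 0 < u ^ 2 / π ^ 2 := by positivity
  linarith

/-- The integrable majorant. -/
noncomputable def Maj (ω : ℝ → ℝ) (k : ℝ) (L : ℝ) : ℝ → ℝ := fun u =>
  π ^ 2 * L ^ 2 / 2 * (Set.Ioc (0:ℝ) k).indicator (fun v => ω v / v) (L * u)
    + π ^ 2 * L ^ 2 / k

lemma Maj_nonneg {ω : ℝ → ℝ} {k L : ℝ} (hk : 0 < k) (hω0 : ∀ δ ≥ (0:ℝ), 0 ≤ ω δ)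
    (u : ℝ) : 0 ≤ Maj ω k L u := by
  unfold Maj
  have h1 : 0 ≤ (Set.Ioc (0:ℝ) k).indicator (fun v => ω v / v) (L * u) := by
    apply Set.indicator_nonneg
    intro v hv
    exact div_nonneg (hω0 v hv.1.le) hv.1.le
  have h2 : (0:ℝ) ≤ π ^ 2 * L ^ 2 / 2 := by positivity
  have h3 : (0:ℝ) ≤ π ^ 2 * L ^ 2 / k := by positivity
  positivity

lemma Maj_integrableOn {ω : ℝ → ℝ} {k L : ℝ} (hk : 0 < k) (hL : 0 < L)
    (hωD : IntegrableOn (fun t => ω t / t) (Ioc 0 k)) :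
    IntegrableOn (Maj ω k L) (Icc 0 π) := by
  have hF : Integrable ((Set.Ioc (0:ℝ) k).indicator (fun v => ω v / v)) := by
    rwa [integrable_indicator_iff measurableSet_Ioc]
  have hFc : Integrable (fun u => (Set.Ioc (0:ℝ) k).indicator (fun v => ω v / v) (L * u)) :=
    hF.comp_mul_left' hL.ne'
  unfold Maj
  apply Integrable.add
  · exact (hFc.const_mul _).integrableOn
  · exact integrableOn_const measure_Icc_lt_top.ne

lemma integrableOn_comp_abs {f : ℝ → ℝ} {c : ℝ} (hc : 0 ≤ c)
    (hf : IntegrableOn f (Icc 0 c)) :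
    IntegrableOn (fun x => f |x|) (Icc (-c) c) := by
  have hIoc : IntegrableOn f (Ioc 0 c) := hf.mono_set Ioc_subset_Icc_self
  have h1 : IntegrableOn (fun x => f |x|) (Icc 0 c) := by
    refine hf.congr_fun (fun x hx => ?_) measurableSet_Icc
    rw [abs_of_nonneg hx.1]
  have h2 : IntegrableOn (fun x => f |x|) (Icc (-c) 0) := by
    rw [← Measure.map_neg_eq_self (volume : Measure ℝ)]
    have m : MeasurableEmbedding fun x : ℝ => -x := (Homeomorph.neg ℝ).measurableEmbedding
    rw [m.integrableOn_map_iff]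
    have : ((fun x => f |x|) ∘ fun x : ℝ => -x) = fun x => f |x| := by
      ext x; simp [Function.comp, abs_neg]
    rw [this]
    have hpre : (fun x : ℝ => -x) ⁻¹' Icc (-c) 0 = Icc 0 c := by
      ext x
      simp only [Set.mem_preimage, Set.mem_Icc]
      constructor <;> (intro h; constructor <;> linarith [h.1, h.2])
    rw [hpre]
    exact h1
  have : Icc (-c) c = Icc (-c) 0 ∪ Icc 0 c := by
    rw [Icc_union_Icc_eq_Icc (by linarith) hc]
  rw [this]
  exact h2.union h1

lemma sin_sq_abs (u : ℝ) : Real.sin (u / 2) ^ 2 = Real.sin (|u| / 2) ^ 2 := by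
  rcases abs_cases u with ⟨h, _⟩ | ⟨h, _⟩
  · rw [h]
  · rw [h]
    have : -u / 2 = -(u / 2) := by ring
    rw [this, Real.sin_neg, neg_sq]

/-- The central pointwise bound on the integrand by the majorant. -/
lemma A_bound {g : ℝ → ℂ} (hg : ContDiff ℝ 1 g) (hunit : ∀ s, ‖deriv g s‖ = 1)
    {ω : ℝ → ℝ}
    (hω : ∀ δ ≥ (0:ℝ), ∀ x y : ℝ, |x - y| ≤ δ → ‖deriv g x - deriv g y‖ ≤ ω δ)
    {k : ℝ} (hk : 0 < k) {L : NNReal} (hL : 0 < (L:ℝ))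
    {h : ℝ → ℝ} (hh : LipschitzWith L h) {τ u : ℝ} (hu0 : u ≠ 0) (hu : |u| ≤ π) :
    |Kker g (h τ) (h (τ + u)) / (2 * Real.sin (u / 2) ^ 2)| ≤ Maj ω k (L:ℝ) |u| := by
  have hπ := Real.pi_pos
  set r := |u| with hr
  have hr0 : 0 < r := abs_pos.2 hu0
  set a := h τ
  set b := h (τ + u)
  have hab : |b - a| ≤ (L:ℝ) * r := by
    have := hh.dist_le_mul (τ + u) τ
    rw [Real.dist_eq, Real.dist_eq] at this
    simpa [add_sub_cancel_left] using this
  have hD : Real.sin (u / 2) ^ 2 = Real.sin (r / 2) ^ 2 := sin_sq_abs u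
  have hDpos : 0 < 2 * Real.sin (r / 2) ^ 2 := sin_sq_pos hr0 hu
  have hDlow : 2 * r ^ 2 / π ^ 2 ≤ 2 * Real.sin (r / 2) ^ 2 := by
    have := sin_sq_lower hr0 hu
    calc 2 * r ^ 2 / π ^ 2 = 2 * (r ^ 2 / π ^ 2) := by ring
      _ ≤ 2 * Real.sin (r / 2) ^ 2 := by linarith
  rw [abs_div, hD, abs_of_pos hDpos, div_le_iff₀ hDpos]
  have hMajnn : 0 ≤ Maj ω k (L:ℝ) r := by
    apply Maj_nonneg hk
    intro δ hδ
    have := hω δ hδ 0 0 (by simp [hδ])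
    simpa using this.trans' (norm_nonneg _)
  have key : |Kker g a b| ≤ Maj ω k (L:ℝ) r * (2 * r ^ 2 / π ^ 2) := by
    rcases le_or_gt ((L:ℝ) * r) k with hcase | hcase
    · -- use the ω bound
      have hmem : (L:ℝ) * r ∈ Set.Ioc (0:ℝ) k := ⟨by positivity, hcase⟩
      have hind : (Set.Ioc (0:ℝ) k).indicator (fun v => ω v / v) ((L:ℝ) * r)
          = ω ((L:ℝ) * r) / ((L:ℝ) * r) := Set.indicator_of_mem hmem _
      have hK : |Kker g a b| ≤ ω ((L:ℝ) * r) * ((L:ℝ) * r) := by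
        have h1 := Kker_bound_omega hg hunit hω (a := a) (b := b) (δ := (L:ℝ) * r) hab
        have hωnn : 0 ≤ ω ((L:ℝ) * r) := by
          have := hω ((L:ℝ) * r) (by positivity) 0 0 (by simp; positivity)
          exact (norm_nonneg _).trans this
        calc |Kker g a b| ≤ ω ((L:ℝ) * r) * |b - a| := h1
          _ ≤ ω ((L:ℝ) * r) * ((L:ℝ) * r) := by
              exact mul_le_mul_of_nonneg_left hab hωnn
      refine hK.trans ?_
      unfold Maj
      rw [hind]
      have e : (π ^ 2 * (L:ℝ) ^ 2 / 2 * (ω ((L:ℝ) * r) / ((L:ℝ) * r)))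
          * (2 * r ^ 2 / π ^ 2) = ω ((L:ℝ) * r) * ((L:ℝ) * r) := by
        field_simp
      have hconst : 0 ≤ π ^ 2 * (L:ℝ) ^ 2 / k * (2 * r ^ 2 / π ^ 2) := by positivity
      nlinarith [e]
    · -- crude bound
      have hind : (Set.Ioc (0:ℝ) k).indicator (fun v => ω v / v) ((L:ℝ) * r) = 0 :=
        Set.indicator_of_notMem (by simp [Set.mem_Ioc]; intro _; linarith) _
      have hK : |Kker g a b| ≤ 2 * ((L:ℝ) * r) := by
        have := Kker_bound_two hg hunit a b
        calc |Kker g a b| ≤ 2 * |b - a| := this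
          _ ≤ 2 * ((L:ℝ) * r) := by linarith
      refine hK.trans ?_
      unfold Maj
      rw [hind, mul_zero, zero_add]
      have e : π ^ 2 * (L:ℝ) ^ 2 / k * (2 * r ^ 2 / π ^ 2) = 2 * (L:ℝ) ^ 2 * r ^ 2 / k := by
        field_simp
      rw [e]
      rw [le_div_iff₀ hk]
      nlinarith
  calc |Kker g a b| ≤ Maj ω k (L:ℝ) r * (2 * r ^ 2 / π ^ 2) := key
    _ ≤ Maj ω k (L:ℝ) r * (2 * Real.sin (r / 2) ^ 2) :=
        mul_le_mul_of_nonneg_left hDlow hMajnn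

lemma A_measurable {g : ℝ → ℂ} (hg : ContDiff ℝ 1 g) {h : ℝ → ℝ} (hh : Continuous h)
    (τ : ℝ) :
    Measurable (fun u => Kker g (h τ) (h (τ + u)) / (2 * Real.sin (u / 2) ^ 2)) := by
  have hnum : Continuous fun u => Kker g (h τ) (h (τ + u)) := by
    unfold Kker
    apply Complex.continuous_re.comp
    apply Continuous.mul
    · exact Complex.continuous_conj.comp
        (((hg.continuous.comp (hh.comp (continuous_const.add continuous_id))).sub
          continuous_const))
    · exact continuous_const
  have hden : Continuous fun u : ℝ => 2 * Real.sin (u / 2) ^ 2 := by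
    continuity
  exact hnum.measurable.div hden.measurable

lemma A_intervalIntegrable {g : ℝ → ℂ} (hg : ContDiff ℝ 1 g)
    (hunit : ∀ s, ‖deriv g s‖ = 1) {ω : ℝ → ℝ}
    (hω : ∀ δ ≥ (0:ℝ), ∀ x y : ℝ, |x - y| ≤ δ → ‖deriv g x - deriv g y‖ ≤ ω δ)
    {k : ℝ} (hk : 0 < k) (hωD : IntegrableOn (fun t => ω t / t) (Ioc 0 k))
    {L : NNReal} (hL : 0 < (L:ℝ))
    {h : ℝ → ℝ} (hh : LipschitzWith L h) (τ : ℝ) {a b : ℝ}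
    (ha : -π ≤ a) (hab : a ≤ b) (hb : b ≤ π) :
    IntervalIntegrable (fun u => Kker g (h τ) (h (τ + u)) / (2 * Real.sin (u / 2) ^ 2))
      volume a b := by
  rw [intervalIntegrable_iff_integrableOn_Ioc_of_le hab]
  have hMaj : IntegrableOn (fun u => Maj ω k (L:ℝ) |u|) (Ioc a b) := by
    refine (integrableOn_comp_abs Real.pi_pos.le (Maj_integrableOn hk hL hωD)).mono_set ?_
    intro x hx
    exact ⟨by linarith [hx.1], by linarith [hx.2]⟩
  refine hMaj.mono' ((A_measurable hg hh.continuous τ).aestronglyMeasurable) ?_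
  have h0 : ∀ᵐ u ∂(volume : Measure ℝ), u ≠ 0 := by
    have : {u : ℝ | ¬ u ≠ 0} = {0} := by ext u; simp
    rw [ae_iff, this]
    exact measure_singleton 0
  filter_upwards [ae_restrict_of_ae h0, ae_restrict_mem measurableSet_Ioc] with u hu0 humem
  rw [Real.norm_eq_abs]
  exact A_bound hg hunit hω hk hL hh hu0
    (abs_le.2 ⟨by linarith [humem.1], by linarith [humem.2]⟩)

set_option maxHeartbeats 1000000 in
lemma keyE {g : ℝ → ℂ} {l : ℝ} (hl : 0 < l) (hg : ContDiff ℝ 1 g)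
    (hper : ∀ s, g (s + l) = g s) (hunit : ∀ s, ‖deriv g s‖ = 1)
    {ω : ℝ → ℝ}
    (hω : ∀ δ ≥ (0:ℝ), ∀ x y : ℝ, |x - y| ≤ δ → ‖deriv g x - deriv g y‖ ≤ ω δ)
    {k : ℝ} (hk : 0 < k) (hωD : IntegrableOn (fun t => ω t / t) (Ioc 0 k))
    {L : NNReal} (hL : 0 < (L:ℝ)) {ε : ℝ} (hε : 0 < ε) :
    ∃ η > (0:ℝ), ∀ h₁ h₂ : ℝ → ℝ, LipschitzWith L h₁ → LipschitzWith L h₂ →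
      (∀ t, |h₁ t - h₂ t| ≤ η) → ∀ τ, |Sop g h₁ τ - Sop g h₂ τ| ≤ ε := by
  have hπ := Real.pi_pos
  have hω0 : ∀ d ≥ (0:ℝ), 0 ≤ ω d := fun d hd =>
    le_trans (norm_nonneg _) (hω d hd 0 0 (by simp [hd]))
  have hMajI := Maj_integrableOn hk hL hωD
  set Φ := Maj ω k (L:ℝ) with hΦ
  set H : ℝ → ℝ := fun x => ∫ t in Ioc 0 x, Φ t with hH
  have hHcont : ContinuousOn H (Icc 0 π) := intervalIntegral.continuousOn_primitive hMajI
  have hH0 : H 0 = 0 := by simp [hH]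
  have htend : Filter.Tendsto H (nhdsWithin 0 (Icc 0 π)) (nhds 0) := by
    have := hHcont 0 ⟨le_rfl, hπ.le⟩
    rwa [ContinuousWithinAt, hH0] at this
  rw [Metric.tendsto_nhdsWithin_nhds] at htend
  obtain ⟨δ', hδ'pos, hδ'⟩ := htend (ε / 8) (by linarith)
  set δ := min (δ' / 2) π with hδdef
  have hδpos : 0 < δ := lt_min (by linarith) hπ
  have hδπ : δ ≤ π := min_le_right _ _
  have hHδnn : 0 ≤ H δ :=
    setIntegral_nonneg measurableSet_Ioc fun t _ => Maj_nonneg hk hω0 t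
  have hHδ : H δ < ε / 8 := by
    have h1 : δ ∈ Icc (0:ℝ) π := ⟨hδpos.le, hδπ⟩
    have h2 : dist δ 0 < δ' := by
      rw [Real.dist_eq, sub_zero, abs_of_pos hδpos]
      calc δ ≤ δ' / 2 := min_le_left _ _
        _ < δ' := by linarith
    have := hδ' h1 h2
    rwa [Real.dist_eq, sub_zero, abs_of_nonneg hHδnn] at this
  set Dδ := 2 * Real.sin (δ / 2) ^ 2 with hDδdef
  have hDδ : 0 < Dδ := sin_sq_pos hδpos hδπ
  have hperiodic' : Function.Periodic (deriv g) l := by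
    intro x
    have he : (fun y => g (y + l)) = g := funext hper
    calc deriv g (x + l) = deriv (fun y => g (y + l)) x := (deriv_comp_add_const g l x).symm
      _ = deriv g x := by rw [he]
  have hUC : UniformContinuous (deriv g) :=
    periodic_unifCont hl (hg.continuous_deriv le_rfl) hperiodic'
  set ε₂ := ε * Dδ / (32 * π * ((L:ℝ) * π + 1)) with hε₂def
  have hε₂pos : 0 < ε₂ := by positivity
  rw [Metric.uniformContinuous_iff] at hUC
  obtain ⟨δ₂, hδ₂pos, hδ₂⟩ := hUC ε₂ hε₂pos
  set η := min (δ₂ / 2) (ε * Dδ / (32 * π)) with hηdef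
  have hηpos : 0 < η := lt_min (by linarith) (by positivity)
  refine ⟨η, hηpos, ?_⟩
  intro h₁ h₂ hh₁ hh₂ hclose τ
  set A₁ : ℝ → ℝ := fun u => Kker g (h₁ τ) (h₁ (τ + u)) / (2 * Real.sin (u / 2) ^ 2)
    with hA₁
  set A₂ : ℝ → ℝ := fun u => Kker g (h₂ τ) (h₂ (τ + u)) / (2 * Real.sin (u / 2) ^ 2)
    with hA₂
  have int₁ : ∀ a b : ℝ, -π ≤ a → a ≤ b → b ≤ π → IntervalIntegrable A₁ volume a b :=
    fun a b ha hab hb => A_intervalIntegrable hg hunit hω hk hωD hL hh₁ τ ha hab hb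
  have int₂ : ∀ a b : ℝ, -π ≤ a → a ≤ b → b ≤ π → IntervalIntegrable A₂ volume a b :=
    fun a b ha hab hb => A_intervalIntegrable hg hunit hω hk hωD hL hh₂ τ ha hab hb
  have intd : ∀ a b : ℝ, -π ≤ a → a ≤ b → b ≤ π →
      IntervalIntegrable (fun u => A₁ u - A₂ u) volume a b :=
    fun a b ha hab hb => (int₁ a b ha hab hb).sub (int₂ a b ha hab hb)
  have hsub : Sop g h₁ τ - Sop g h₂ τ = ∫ u in (-π)..π, (A₁ u - A₂ u) :=
    (intervalIntegral.integral_sub (int₁ _ _ le_rfl (by linarith) le_rfl)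
      (int₂ _ _ le_rfl (by linarith) le_rfl)).symm
  have hd1 : -π ≤ -δ := by linarith
  have e1 := intervalIntegral.integral_add_adjacent_intervals
    (intd (-π) (-δ) le_rfl hd1 (by linarith)) (intd (-δ) δ (by linarith) (by linarith) hδπ)
  have e2 := intervalIntegral.integral_add_adjacent_intervals
    (intd (-π) δ le_rfl (by linarith) hδπ) (intd δ π (by linarith) hδπ le_rfl)
  -- the majorant composed with abs is interval integrable on subintervals of [-π, π]
  have hmajII : ∀ a b : ℝ, -π ≤ a → a ≤ b → b ≤ π →
      IntervalIntegrable (fun u => Φ |u|) volume a b := by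
    intro a b ha hab hb
    rw [intervalIntegrable_iff_integrableOn_Ioc_of_le hab]
    refine (integrableOn_comp_abs hπ.le hMajI).mono_set ?_
    intro x hx
    exact ⟨by linarith [hx.1], by linarith [hx.2]⟩
  -- middle estimate
  have hmid : |∫ u in (-δ)..δ, (A₁ u - A₂ u)| ≤ 4 * H δ := by
    have hmajint : IntervalIntegrable (fun u => 2 * Φ |u|) volume (-δ) δ :=
      (hmajII (-δ) δ (by linarith) (by linarith) hδπ).const_mul 2
    have hae : ∀ᵐ t ∂volume.restrict (Set.uIoc (-δ) δ), ‖A₁ t - A₂ t‖ ≤ 2 * Φ |t| := by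
      have h0 : ∀ᵐ u ∂(volume : Measure ℝ), u ≠ 0 := by
        have he : {u : ℝ | ¬ u ≠ 0} = {0} := by ext u; simp
        rw [ae_iff, he]
        exact measure_singleton 0
      filter_upwards [ae_restrict_of_ae h0, ae_restrict_mem measurableSet_uIoc]
        with u hu0 humem
      have huIoc : u ∈ Ioc (-δ) δ := by
        rwa [uIoc_of_le (by linarith : -δ ≤ δ)] at humem
      have huabs : |u| ≤ π := by
        rw [abs_le]; exact ⟨by linarith [huIoc.1], by linarith [huIoc.2]⟩
      have b1 := A_bound hg hunit hω hk hL hh₁ (τ := τ) hu0 huabs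
      have b2 := A_bound hg hunit hω hk hL hh₂ (τ := τ) hu0 huabs
      rw [Real.norm_eq_abs]
      calc |A₁ u - A₂ u| ≤ |A₁ u| + |A₂ u| := abs_sub _ _
        _ ≤ Φ |u| + Φ |u| := add_le_add b1 b2
        _ = 2 * Φ |u| := by ring
    have hle := intervalIntegral.norm_integral_le_abs_of_norm_le hae hmajint
    have hcomp : (∫ u in (-δ)..δ, 2 * Φ |u|) = 4 * H δ := by
      have s1 : (∫ u in (0:ℝ)..δ, Φ |u|) = H δ := by
        rw [intervalIntegral.integral_of_le hδpos.le]
        refine setIntegral_congr_fun measurableSet_Ioc (fun x hx => ?_)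
        rw [abs_of_pos hx.1]
      have s2 : (∫ u in (-δ)..(0:ℝ), Φ |u|) = ∫ u in (0:ℝ)..δ, Φ |u| := by
        have hcn := intervalIntegral.integral_comp_neg (a := (0:ℝ)) (b := δ)
          (f := fun x => Φ |x|)
        simp only [abs_neg, neg_zero] at hcn
        exact hcn.symm
      have s3 := intervalIntegral.integral_add_adjacent_intervals
        (hmajII (-δ) 0 (by linarith) (by linarith) hπ.le)
        (hmajII 0 δ (by linarith) hδpos.le hδπ)
      rw [intervalIntegral.integral_const_mul]
      rw [← s3, s2, s1]
      ring
    calc |∫ u in (-δ)..δ, (A₁ u - A₂ u)| ≤ abs (∫ u in (-δ)..δ, 2 * Φ |u|) := hle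
      _ = |4 * H δ| := by rw [hcomp]
      _ = 4 * H δ := abs_of_nonneg (by linarith)
  -- far pointwise estimate
  set N := 2 * η + (L:ℝ) * π * ε₂ with hNdef
  have hNnn : 0 ≤ N := by positivity
  have hfar_pt : ∀ x : ℝ, δ ≤ |x| → |x| ≤ π → |A₁ x - A₂ x| ≤ N / Dδ := by
    intro x hx1 hx2
    have hx0 : x ≠ 0 := by
      intro hx
      rw [hx, abs_zero] at hx1; linarith
    have hDx : Real.sin (x / 2) ^ 2 = Real.sin (|x| / 2) ^ 2 := sin_sq_abs x
    have hxpos : 0 < |x| := by positivity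
    have hDxpos : 0 < 2 * Real.sin (x / 2) ^ 2 := by
      rw [hDx]; exact sin_sq_pos hxpos hx2
    have hDxge : Dδ ≤ 2 * Real.sin (x / 2) ^ 2 := by
      rw [hDx]
      have hs : Real.sin (δ / 2) ≤ Real.sin (|x| / 2) :=
        Real.sin_le_sin_of_le_of_le_pi_div_two (by linarith) (by linarith) (by linarith)
      have hsn : 0 ≤ Real.sin (δ / 2) :=
        Real.sin_nonneg_of_nonneg_of_le_pi (by linarith) (by linarith)
      have := pow_le_pow_left₀ hsn hs 2
      rw [hDδdef]; nlinarith
    have glip := g_lip hg hunit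
    have gl : ∀ x y : ℝ, ‖g x - g y‖ ≤ |x - y| := by
      intro x y
      have := glip.dist_le_mul x y
      rwa [dist_eq_norm, Real.dist_eq, NNReal.coe_one, one_mul] at this
    have t1 : ‖g (h₁ (τ + x)) - g (h₂ (τ + x))‖ ≤ η := (gl _ _).trans (hclose _)
    have t2 : ‖g (h₁ τ) - g (h₂ τ)‖ ≤ η := (gl _ _).trans (hclose _)
    have t3 : ‖g (h₂ (τ + x)) - g (h₂ τ)‖ ≤ (L:ℝ) * π := by
      refine (gl _ _).trans ?_
      have hlip := hh₂.dist_le_mul (τ + x) τ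
      rw [Real.dist_eq, Real.dist_eq, add_sub_cancel_left] at hlip
      calc |h₂ (τ + x) - h₂ τ| ≤ (L:ℝ) * |x| := hlip
        _ ≤ (L:ℝ) * π := mul_le_mul_of_nonneg_left hx2 hL.le
    have t4 : ‖deriv g (h₁ τ) - deriv g (h₂ τ)‖ ≤ ε₂ := by
      have hd : dist (h₁ τ) (h₂ τ) < δ₂ := by
        rw [Real.dist_eq]
        calc |h₁ τ - h₂ τ| ≤ η := hclose τ
          _ ≤ δ₂ / 2 := min_le_left _ _
          _ < δ₂ := by linarith
      have := hδ₂ hd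
      rw [dist_eq_norm] at this
      exact this.le
    have hnum : |Kker g (h₁ τ) (h₁ (τ + x)) - Kker g (h₂ τ) (h₂ (τ + x))| ≤ N := by
      refine (Kker_diff hunit _ _ _ _).trans ?_
      have hprod : ‖g (h₂ (τ + x)) - g (h₂ τ)‖ * ‖deriv g (h₁ τ) - deriv g (h₂ τ)‖
          ≤ ((L:ℝ) * π) * ε₂ :=
        mul_le_mul t3 t4 (norm_nonneg _) (by positivity)
      rw [hNdef]
      linarith
    have hsplit2 : A₁ x - A₂ x
        = (Kker g (h₁ τ) (h₁ (τ + x)) - Kker g (h₂ τ) (h₂ (τ + x)))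
          / (2 * Real.sin (x / 2) ^ 2) := by
      simp only [hA₁, hA₂, sub_div]
    rw [hsplit2, abs_div, abs_of_pos hDxpos]
    exact div_le_div₀ hNnn hnum hDδ hDxge
  -- far integral estimates
  have hright : |∫ u in δ..π, (A₁ u - A₂ u)| ≤ N / Dδ * |π - δ| := by
    have h := intervalIntegral.norm_integral_le_of_norm_le_const (a := δ) (b := π)
      (C := N / Dδ) (f := fun u => A₁ u - A₂ u) ?_
    · simpa [Real.norm_eq_abs] using h
    intro x hx
    rw [Real.norm_eq_abs]
    rw [uIoc_of_le hδπ] at hx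
    have : δ ≤ |x| := by rw [abs_of_pos (by linarith [hx.1] : (0:ℝ) < x)]; linarith [hx.1]
    exact hfar_pt x this (by rw [abs_of_pos (by linarith [hx.1])]; exact hx.2)
  have hleft : |∫ u in (-π)..(-δ), (A₁ u - A₂ u)| ≤ N / Dδ * |(-δ) - (-π)| := by
    have h := intervalIntegral.norm_integral_le_of_norm_le_const (a := -π) (b := -δ)
      (C := N / Dδ) (f := fun u => A₁ u - A₂ u) ?_
    · simpa [Real.norm_eq_abs] using h
    intro x hx
    rw [Real.norm_eq_abs]
    rw [uIoc_of_le hd1] at hx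
    have hxneg : x < 0 := by linarith [hx.2]
    have habs : |x| = -x := abs_of_neg hxneg
    refine hfar_pt x (by rw [habs]; linarith [hx.2]) (by rw [habs]; linarith [hx.1])
  -- arithmetic assembly
  have hCπ : N / Dδ * π ≤ 3 * ε / 32 := by
    rw [div_mul_eq_mul_div, div_le_iff₀ hDδ]
    have hη2 : η ≤ ε * Dδ / (32 * π) := min_le_right _ _
    have hη2' : η * (32 * π) ≤ ε * Dδ := by
      rwa [← le_div_iff₀ (by positivity)]
    have hid : ε₂ * ((L:ℝ) * π + 1) * (32 * π) = ε * Dδ := by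
      rw [hε₂def]
      field_simp
    nlinarith [mul_pos hπ hε₂pos, hε₂pos, hπ, mul_pos (mul_pos hπ hπ) hε₂pos]
  have hbound1 : N / Dδ * |π - δ| ≤ 3 * ε / 32 := by
    refine le_trans ?_ hCπ
    apply mul_le_mul_of_nonneg_left _ (by positivity)
    rw [abs_of_nonneg (by linarith)]
    linarith
  have hbound2 : N / Dδ * |(-δ) - (-π)| ≤ 3 * ε / 32 := by
    refine le_trans ?_ hCπ
    apply mul_le_mul_of_nonneg_left _ (by positivity)
    rw [abs_of_nonneg (by linarith)]
    linarith
  have hdec : Sop g h₁ τ - Sop g h₂ τ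
      = (∫ u in (-π)..(-δ), (A₁ u - A₂ u)) + (∫ u in (-δ)..δ, (A₁ u - A₂ u))
        + (∫ u in δ..π, (A₁ u - A₂ u)) := by
    rw [hsub]
    rw [← e2, ← e1]
  rw [hdec]
  calc |(∫ u in (-π)..(-δ), (A₁ u - A₂ u)) + (∫ u in (-δ)..δ, (A₁ u - A₂ u))
        + (∫ u in δ..π, (A₁ u - A₂ u))|
      ≤ |(∫ u in (-π)..(-δ), (A₁ u - A₂ u))| + |(∫ u in (-δ)..δ, (A₁ u - A₂ u))|
        + |(∫ u in δ..π, (A₁ u - A₂ u))| := by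
          exact (abs_add_le _ _).trans (add_le_add_left (abs_add_le _ _) _)
    _ ≤ 3 * ε / 32 + 4 * H δ + 3 * ε / 32 := by
        refine add_le_add (add_le_add (hleft.trans hbound2) hmid) (hright.trans hbound1)
    _ ≤ ε := by linarith

lemma Sop_shift (g : ℝ → ℂ) (h : ℝ → ℝ) (c τ : ℝ) :
    Sop g (fun t => h (t + c)) τ = Sop g h (τ + c) := by
  unfold Sop
  refine intervalIntegral.integral_congr fun u _ => ?_
  simp only []
  have : τ + u + c = τ + c + u := by ring
  rw [this]

/-- If `fₙ → f` uniformly, then `T[fₙ] → T[f]` uniformly on `[0, 2π]`; in particular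
`T[f]` is continuous there. -/
theorem T_uniform_convergence (l : ℝ) (hl : 0 < l) (L : NNReal)
    (g : ℝ → ℂ) (hg : ContDiff ℝ 1 g)
    (hper : ∀ s, g (s + l) = g s)
    (hunit : ∀ s, ‖deriv g s‖ = 1)
    (ω : ℝ → ℝ)
    (hω : ∀ δ ≥ (0:ℝ), ∀ x y : ℝ, |x - y| ≤ δ → ‖deriv g x - deriv g y‖ ≤ ω δ)
    (hωD : ∃ k > (0:ℝ), IntegrableOn (fun t => ω t / t) (Ioc 0 k))
    (f : ℝ → ℝ) (hf : Monotone f) (hfl : LipschitzWith L f)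
    (hfqp : ∀ t, f (t + 2 * π) = f t + l)
    (fn : ℕ → ℝ → ℝ) (hfn : ∀ n, Monotone (fn n))
    (hfnl : ∀ n, LipschitzWith L (fn n))
    (hfnqp : ∀ n t, fn n (t + 2 * π) = fn n t + l)
    (hconv : TendstoUniformly fn f atTop) :
    TendstoUniformlyOn (fun n => Topf g (fn n)) (Topf g f) atTop (Icc 0 (2 * π)) ∧
    ContinuousOn (Topf g f) (Icc 0 (2 * π)) := by

  obtain ⟨k, hk, hωDk⟩ := hωD
  have hπ := Real.pi_pos
  have hL : 0 < (L:ℝ) := by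
    by_contra hc
    push_neg at hc
    have h0 : (L:ℝ) = 0 := le_antisymm hc L.coe_nonneg
    have := hfl.dist_le_mul (0 + 2 * π) 0
    rw [h0, zero_mul, dist_le_zero] at this
    rw [hfqp 0] at this
    have : l = 0 := by
      have := sub_eq_zero.2 this
      linarith [this]
    linarith
  have hTS : ∀ h : ℝ → ℝ, (∀ t, h (t + 2 * π) = h t + l) → ∀ τ, Topf g h τ = Sop g h τ :=
    fun h hqp τ => Topf_eq_Sop hper h hqp τ
  constructor
  · rw [Metric.tendstoUniformlyOn_iff]
    intro ε hε
    obtain ⟨η, hηpos, hη⟩ := keyE hl hg hper hunit hω hk hωDk hL (half_pos hε)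
    rw [Metric.tendstoUniformly_iff] at hconv
    filter_upwards [hconv η hηpos] with n hn
    intro x _
    have hclose : ∀ t, |f t - fn n t| ≤ η := fun t => by
      have := hn t
      rw [Real.dist_eq] at this
      exact this.le
    have := hη f (fn n) hfl (hfnl n) hclose x
    rw [Real.dist_eq, hTS f hfqp x, hTS (fn n) (hfnqp n) x]
    calc |Sop g f x - Sop g (fn n) x| ≤ ε / 2 := this
      _ < ε := by linarith
  · have hcont : Continuous (Topf g f) := by
      rw [Metric.continuous_iff]
      intro b ε hε
      obtain ⟨η, hηpos, hη⟩ := keyE hl hg hper hunit hω hk hωDk hL (half_pos hε)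
      refine ⟨η / (L:ℝ), by positivity, ?_⟩
      intro a hab
      set c := a - b with hc
      have hshift : LipschitzWith L (fun t => f (t + c)) := by
        intro x y
        have := hfl (x + c) (y + c)
        rwa [edist_add_right] at this
      have hclose : ∀ t, |f (t + c) - f t| ≤ η := by
        intro t
        have := hfl.dist_le_mul (t + c) t
        rw [Real.dist_eq, Real.dist_eq, add_sub_cancel_left] at this
        refine this.trans ?_
        have hcb : |c| < η / (L:ℝ) := by rwa [Real.dist_eq] at hab
        calc (L:ℝ) * |c| ≤ (L:ℝ) * (η / (L:ℝ)) :=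
              mul_le_mul_of_nonneg_left hcb.le hL.le
          _ = η := by field_simp
      have := hη (fun t => f (t + c)) f hshift hfl hclose b
      rw [Sop_shift g f c b] at this
      have hbc : b + c = a := by rw [hc]; ring
      rw [hbc] at this
      rw [Real.dist_eq, hTS f hfqp a, hTS f hfqp b]
      calc |Sop g f a - Sop g f b| ≤ ε / 2 := this
        _ < ε := by linarith
    exact hcont.continuousOn
end
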